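/- Under FCFS, exactly one job in each busy period is a priority job (has sojourn time exactly j): the first job; all subsequent jobs in the busy period have sojourn time at least j+1. -/
import Mathlib


/-- Under FCFS, exactly one job in each busy period is a priority job (sojourn
time exactly `j`), namely the first; every subsequent job of the busy period
has sojourn time at least `j + 1`. -/
theorem fcfs_unique_priority_job
    (n : ℕ) (j δ : ℤ) (Y W : ℕ → ℤ)
    (hδ1 : 1 ≤ δ) (hδ2 : 2 * δ ≤ j)
    (hY : ∀ i, Y i = j + 1 - δ ∨ Y i = j + 1 + δ)
    (hW1 : W 1 = j)
    (hrec : ∀ k, 2 ≤ k → k ≤ n → W k = W (k - 1) - Y (k - 1) + j)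
    (hbusy : ∀ k, 2 ≤ k → k ≤ n → Y (k - 1) < W (k - 1)) :
    W 1 = j ∧
      (∀ k, 2 ≤ k → k ≤ n → j + 1 ≤ W k) ∧
      (∀ k, 1 ≤ k → k ≤ n → W k = j → k = 1) := by
  have hge : ∀ k, 2 ≤ k → k ≤ n → j + 1 ≤ W k := by
    intro k hk2 hkn
    have h1 := hrec k hk2 hkn
    have h2 := hbusy k hk2 hkn
    omega
  refine ⟨hW1, hge, ?_⟩
  intro k hk1 hkn hWk
  by_contra h
  have hk2 : 2 ≤ k := by omega
  have := hge k hk2 hkn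
  omega
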